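/- Let c be a cycle point in a min-set M and define Λ(c) = { l₀ + R l₁ + ⋯ + R^k l_k + R^{k+1} c : l₀…l_k ∈ Ω(c) } where Ω(c) is the set of finite words with digits in L not ending in a cycle word for c. Then Λ(c) is the smallest subset of ℝ containing c that satisfies the invariance RΛ + L ⊆ Λ. -/

import Mathlib

open Complex

/-- `m_B(x) = (1/N) ∑_{b ∈ B} e^{2πibx}`. -/
noncomputable def mBg (B : Finset ℤ) (x : ℝ) : ℂ :=
  (∑ b ∈ B, Complex.exp (2 * Real.pi * Complex.I * ((b : ℝ) * x))) / (B.card : ℂ)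

/-- Apply the maps `g_l(t) = (t - l)/R` along a word, first digit first. -/
noncomputable def run (R : ℤ) (c : ℝ) (w : List ℤ) : ℝ :=
  w.foldl (fun t l => (t - (l : ℝ)) / (R : ℝ)) c

/-- A cycle word for `c`: a nonempty word with digits in `L`, with all transitions
possible (`α_l m_B(g_l(t)) ≠ 0`), returning to `c` only at the last step. -/
noncomputable def CycleWord (R : ℤ) (B L : Finset ℤ) (α : ℤ → ℂ) (c : ℝ) (w : List ℤ) :
    Prop :=
  w ≠ [] ∧ (∀ l ∈ w, l ∈ L) ∧ run R c w = c ∧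
  (∀ k : ℕ, k + 1 < w.length → run R c (w.take (k + 1)) ≠ c) ∧
  (∀ k : ℕ, k < w.length → α (w.getD k 0) * mBg B (run R c (w.take (k + 1))) ≠ 0)

/-- `Ω(c)`: finite words with digits in `L` that do not end in a cycle word for `c`. -/
noncomputable def Omega (R : ℤ) (B L : Finset ℤ) (α : ℤ → ℂ) (c : ℝ) (w : List ℤ) :
    Prop :=
  (∀ l ∈ w, l ∈ L) ∧ ¬ ∃ u v : List ℤ, CycleWord R B L α c v ∧ w = u ++ v

/-- `Λ(c) = { l₀ + R l₁ + ⋯ + R^k l_k + R^{k+1} c : l₀…l_k ∈ Ω(c) }`. -/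
noncomputable def Lam (R : ℤ) (B L : Finset ℤ) (α : ℤ → ℂ) (c : ℝ) : Set ℝ :=
  {x | ∃ w : List ℤ, Omega R B L α c w ∧
    x = (∑ i ∈ Finset.range w.length, (R : ℝ) ^ i * (w.getD i 0 : ℝ)) +
        (R : ℝ) ^ w.length * c}

/-- Invariance of a set under the possible transitions. -/
noncomputable def InvSet (R : ℤ) (B L : Finset ℤ) (α : ℤ → ℂ) (M : Set ℝ) : Prop :=
  ∀ t ∈ M, ∀ l ∈ L, α l * mBg B ((t - (l : ℝ)) / (R : ℝ)) ≠ 0 →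
    (t - (l : ℝ)) / (R : ℝ) ∈ M

/-- A min-set: nonempty, finite, invariant, and minimal with these properties. -/
noncomputable def MinSet (R : ℤ) (B L : Finset ℤ) (α : ℤ → ℂ) (M : Set ℝ) : Prop :=
  M.Finite ∧ M.Nonempty ∧ InvSet R B L α M ∧
    ∀ M' ⊆ M, M'.Nonempty → InvSet R B L α M' → M' = M


noncomputable def val (R : ℤ) (s : ℝ) (w : List ℤ) : ℝ :=
  (∑ i ∈ Finset.range w.length, (R : ℝ) ^ i * (w.getD i 0 : ℝ)) + (R : ℝ) ^ w.length * s

lemma val_cons (R : ℤ) (s : ℝ) (l : ℤ) (w : List ℤ) :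
    val R s (l :: w) = (l : ℝ) + (R : ℝ) * val R s w := by
  simp only [val, List.length_cons, Finset.sum_range_succ']
  simp only [List.getD_cons_succ, List.getD_cons_zero, pow_succ, pow_zero, one_mul,
    Int.cast_id]
  rw [mul_add, Finset.mul_sum]
  have h1 : ∑ i ∈ Finset.range w.length, (R : ℝ) * ((R : ℝ) ^ i * (w.getD i 0 : ℝ)) =
      ∑ x ∈ Finset.range w.length, (R : ℝ) ^ x * (R : ℝ) * (w.getD x 0 : ℝ) :=
    Finset.sum_congr rfl (fun x _ => by ring)
  rw [h1]; ring

lemma run_cons (R : ℤ) (t : ℝ) (l : ℤ) (w : List ℤ) :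
    run R t (l :: w) = run R ((t - l) / R) w := rfl

lemma val_run (R : ℤ) (hR : (R : ℝ) ≠ 0) :
    ∀ (w : List ℤ) (t : ℝ), val R (run R t w) w = t := by
  intro w
  induction w with
  | nil => intro t; simp [val, run]
  | cons l w ih =>
    intro t
    rw [run_cons, val_cons, ih]
    field_simp
    ring

lemma omega_tail (R : ℤ) (B L : Finset ℤ) (α : ℤ → ℂ) (c : ℝ) (l : ℤ) (w : List ℤ)
    (h : Omega R B L α c (l :: w)) : Omega R B L α c w := by
  obtain ⟨h1, h2⟩ := h
  refine ⟨fun a ha => h1 a (List.mem_cons_of_mem _ ha), ?_⟩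
  rintro ⟨u, v, hv, rfl⟩
  exact h2 ⟨l :: u, v, hv, rfl⟩

/-- for a cycle point `c` of a min-set `M`, the set `Λ(c)` is the smallest
subset of `ℝ` containing `c` satisfying the invariance `RΛ + L ⊆ Λ`. -/
theorem stmt12 (R : ℤ) (hR : 2 ≤ R) (B L : Finset ℤ) (h0L : (0 : ℤ) ∈ L) (α : ℤ → ℂ)
    (hα0 : α 0 = 1) (M : Set ℝ) (hM : MinSet R B L α M) (c : ℝ) (hc : c ∈ M) :
    c ∈ Lam R B L α c ∧
    (∀ x ∈ Lam R B L α c, ∀ l ∈ L, (R : ℝ) * x + (l : ℝ) ∈ Lam R B L α c) ∧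
    (∀ S : Set ℝ, c ∈ S → (∀ x ∈ S, ∀ l ∈ L, (R : ℝ) * x + (l : ℝ) ∈ S) →
      Lam R B L α c ⊆ S) := by
  have hR0 : (R : ℝ) ≠ 0 := by
    have : (0 : ℝ) < (R : ℝ) := by exact_mod_cast lt_of_lt_of_le (by norm_num) hR
    linarith
  have hcL : c ∈ Lam R B L α c := by
    refine ⟨[], ⟨by simp, ?_⟩, by simp⟩
    rintro ⟨u, v, hv, huv⟩
    exact hv.1 (List.append_eq_nil_iff.mp huv.symm).2
  refine ⟨hcL, ?_, ?_⟩
  · rintro x ⟨w, hw, rfl⟩ l hl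
    have hval : (R : ℝ) * ((∑ i ∈ Finset.range w.length, (R : ℝ) ^ i * (w.getD i 0 : ℝ)) +
        (R : ℝ) ^ w.length * c) + (l : ℝ) = val R c (l :: w) := by
      rw [val_cons]; simp [val]; ring
    rw [hval]
    by_cases h : ∃ u v : List ℤ, CycleWord R B L α c v ∧ l :: w = u ++ v
    · obtain ⟨u, v, hv, huv⟩ := h
      cases u with
      | nil =>
        simp only [List.nil_append] at huv
        rw [huv]
        have hrun : run R c v = c := hv.2.2.1
        have : val R c v = c := by
          conv_lhs => rw [← hrun]
          exact val_run R hR0 v c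
        rw [this]
        exact hcL
      | cons a u =>
        exfalso
        apply hw.2
        refine ⟨u, v, hv, ?_⟩
        simpa using List.tail_eq_of_cons_eq huv
    · exact ⟨l :: w, ⟨fun a ha => by
        rcases List.mem_cons.mp ha with h1 | h1
        · exact h1 ▸ hl
        · exact hw.1 a h1, h⟩, by simp [val]⟩
  · intro S hcS hS
    rintro x ⟨w, hw, rfl⟩
    have key : ∀ w : List ℤ, Omega R B L α c w → val R c w ∈ S := by
      intro w
      induction w with
      | nil => intro _; simpa [val] using hcS
      | cons l w ih =>
        intro hw
        rw [val_cons, add_comm]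
        exact hS _ (ih (omega_tail R B L α c l w hw)) l (hw.1 l List.mem_cons_self)
    have := key w hw
    simpa [val] using this
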